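/- Let g be a Lie algebra over a field K and let r ∈ g ⊗ g be antisymmetric. Then for every x ∈ g the identity Alt((δ_r ⊗ id)(δ_r(x))) + ⁅x, ⟦r, r⟧⁆ = 0 holds in g ⊗ g ⊗ g, where δ_r(x) = ⁅x, r⁆, ⟦r, r⟧ = [r₁₂, r₁₃] + [r₁₂, r₂₃] + [r₁₃, r₂₃], and Alt is the sum of the three cyclic rotations of the tensor factors. -/

import Mathlib

open TensorProduct

attribute [local instance 100] LieRing.ofAssociativeRing

/-- The Lie bracket of `g`, as a linear map `g ⊗ g → g`. -/
noncomputable def lieBracketTensor (K : Type*) [Field K] (L : Type*) [LieRing L]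
    [LieAlgebra K L] : L ⊗[K] L →ₗ[K] L :=
  TensorProduct.lift (LieAlgebra.ad K L).toLinearMap

/-- The linear map `(g⊗g) ⊗ (g⊗g) → g⊗g⊗g` determined on pure tensors by
`(a⊗b)⊗(c⊗d) ↦ ⁅a,c⁆⊗b⊗d + a⊗⁅b,c⁆⊗d + a⊗c⊗⁅b,d⁆`; applied to `r ⊗ r` it yields
`⟦r,r⟧ = [r₁₂,r₁₃] + [r₁₂,r₂₃] + [r₁₃,r₂₃]`. -/
noncomputable def ybMap (K : Type*) [Field K] (L : Type*) [LieRing L] [LieAlgebra K L] :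
    (L ⊗[K] L) ⊗[K] (L ⊗[K] L) →ₗ[K] L ⊗[K] (L ⊗[K] L) :=
  (TensorProduct.map (lieBracketTensor K L) (LinearMap.id : L ⊗[K] L →ₗ[K] L ⊗[K] L)).comp
      (TensorProduct.tensorTensorTensorComm K L L L L).toLinearMap
  + (TensorProduct.map (LinearMap.id : L →ₗ[K] L)
        ((TensorProduct.map (lieBracketTensor K L) (LinearMap.id : L →ₗ[K] L)).comp
          (TensorProduct.assoc K L L L).symm.toLinearMap)).comp
      (TensorProduct.assoc K L L (L ⊗[K] L)).toLinearMap
  + (TensorProduct.map (LinearMap.id : L →ₗ[K] L)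
        (TensorProduct.map (LinearMap.id : L →ₗ[K] L) (lieBracketTensor K L))).comp
      ((TensorProduct.assoc K L L (L ⊗[K] L)).toLinearMap.comp
        (TensorProduct.tensorTensorTensorComm K L L L L).toLinearMap)

/-- For `r ∈ g ⊗ g`, the linear map `δ_r : g → g ⊗ g`, `δ_r(x) = ⁅x, r⁆`. -/
noncomputable def deltaR {K : Type*} [Field K] {L : Type*} [LieRing L] [LieAlgebra K L]
    (r : L ⊗[K] L) : L →ₗ[K] L ⊗[K] L where
  toFun x := ⁅x, r⁆
  map_add' x y := add_lie x y r
  map_smul' t x := smul_lie t x r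

/-- The cyclic rotation `a⊗b⊗c ↦ b⊗c⊗a` of `g⊗g⊗g`. -/
noncomputable def cycMap (K : Type*) [Field K] (L : Type*) [LieRing L] [LieAlgebra K L] :
    L ⊗[K] (L ⊗[K] L) →ₗ[K] L ⊗[K] (L ⊗[K] L) :=
  (TensorProduct.assoc K L L L).toLinearMap.comp
    (TensorProduct.comm K L (L ⊗[K] L)).toLinearMap

/-- `Alt : g⊗g⊗g → g⊗g⊗g`, `a⊗b⊗c ↦ a⊗b⊗c + c⊗a⊗b + b⊗c⊗a`, the sum of the three
cyclic rotations of the tensor factors. -/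
noncomputable def altMap (K : Type*) [Field K] (L : Type*) [LieRing L] [LieAlgebra K L] :
    L ⊗[K] (L ⊗[K] L) →ₗ[K] L ⊗[K] (L ⊗[K] L) :=
  LinearMap.id + cycMap K L + (cycMap K L).comp (cycMap K L)

section AuxCYBE

variable {K : Type*} [Field K] {L : Type*} [LieRing L] [LieAlgebra K L]

noncomputable def c1fun (x a b c d : L) : L ⊗[K] (L ⊗[K] L) :=
  ⁅a, ⁅c, x⁆⁆ ⊗ₜ[K] (d ⊗ₜ[K] b)
  + ⁅a, c⁆ ⊗ₜ[K] (⁅d, x⁆ ⊗ₜ[K] b)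
  + a ⊗ₜ[K] (⁅d, x⁆ ⊗ₜ[K] ⁅b, c⁆)
  + a ⊗ₜ[K] (d ⊗ₜ[K] ⁅b, ⁅c, x⁆⁆)

noncomputable def c2fun (x a b c d : L) : L ⊗[K] (L ⊗[K] L) :=
  ⁅c, x⁆ ⊗ₜ[K] (⁅a, d⁆ ⊗ₜ[K] b)
  + ⁅c, x⁆ ⊗ₜ[K] (a ⊗ₜ[K] ⁅b, d⁆)
  - a ⊗ₜ[K] (⁅c, x⁆ ⊗ₜ[K] ⁅b, d⁆)
  + c ⊗ₜ[K] (⁅a, ⁅d, x⁆⁆ ⊗ₜ[K] b)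
  - a ⊗ₜ[K] (c ⊗ₜ[K] ⁅b, ⁅d, x⁆⁆)
  + c ⊗ₜ[K] (a ⊗ₜ[K] ⁅b, ⁅d, x⁆⁆)

noncomputable def c3fun (x a b c d : L) : L ⊗[K] (L ⊗[K] L) :=
  ⁅c, ⁅a, x⁆⁆ ⊗ₜ[K] (b ⊗ₜ[K] d)
  - ⁅a, x⁆ ⊗ₜ[K] (⁅b, c⁆ ⊗ₜ[K] d)
  - ⁅a, x⁆ ⊗ₜ[K] (c ⊗ₜ[K] ⁅b, d⁆)
  - ⁅a, c⁆ ⊗ₜ[K] (⁅b, x⁆ ⊗ₜ[K] d)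
  + a ⊗ₜ[K] (⁅c, ⁅b, x⁆⁆ ⊗ₜ[K] d)
  + a ⊗ₜ[K] (c ⊗ₜ[K] ⁅d, ⁅b, x⁆⁆)

noncomputable def C1bil (x : L) :
    L ⊗[K] L →ₗ[K] L ⊗[K] L →ₗ[K] L ⊗[K] (L ⊗[K] L) :=
  TensorProduct.lift <| LinearMap.mk₂ K
    (fun a b => TensorProduct.lift <| LinearMap.mk₂ K (c1fun (K := K) x a b)
      (fun c c' d => by simp only [c1fun, add_lie, lie_add, tmul_add, add_tmul]; abel)
      (fun t c d => by simp only [c1fun, smul_lie, lie_smul, tmul_smul, ← TensorProduct.smul_tmul', smul_add, smul_sub]; try module)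
      (fun c d d' => by simp only [c1fun, add_lie, lie_add, tmul_add, add_tmul]; abel)
      (fun t c d => by simp only [c1fun, smul_lie, lie_smul, tmul_smul, ← TensorProduct.smul_tmul', smul_add, smul_sub]; try module))
    (fun a a' b => TensorProduct.ext' fun c d => by
      simp only [LinearMap.add_apply, TensorProduct.lift.tmul, LinearMap.mk₂_apply]
      simp only [c1fun, add_lie, lie_add, tmul_add, add_tmul]; abel)
    (fun t a b => TensorProduct.ext' fun c d => by
      simp only [LinearMap.smul_apply, TensorProduct.lift.tmul, LinearMap.mk₂_apply]
      simp only [c1fun, smul_lie, lie_smul, tmul_smul, ← TensorProduct.smul_tmul', smul_add, smul_sub]; try module)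
    (fun a b b' => TensorProduct.ext' fun c d => by
      simp only [LinearMap.add_apply, TensorProduct.lift.tmul, LinearMap.mk₂_apply]
      simp only [c1fun, add_lie, lie_add, tmul_add, add_tmul]; abel)
    (fun t a b => TensorProduct.ext' fun c d => by
      simp only [LinearMap.smul_apply, TensorProduct.lift.tmul, LinearMap.mk₂_apply]
      simp only [c1fun, smul_lie, lie_smul, tmul_smul, ← TensorProduct.smul_tmul', smul_add, smul_sub]; try module)

lemma C1bil_tmul (x a b c d : L) :
    C1bil x (a ⊗ₜ[K] b) (c ⊗ₜ[K] d) = c1fun x a b c d := by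
  simp [C1bil]

noncomputable def C2bil (x : L) :
    L ⊗[K] L →ₗ[K] L ⊗[K] L →ₗ[K] L ⊗[K] (L ⊗[K] L) :=
  TensorProduct.lift <| LinearMap.mk₂ K
    (fun a b => TensorProduct.lift <| LinearMap.mk₂ K (c2fun (K := K) x a b)
      (fun c c' d => by simp only [c2fun, add_lie, lie_add, tmul_add, add_tmul]; abel)
      (fun t c d => by simp only [c2fun, smul_lie, lie_smul, tmul_smul, ← TensorProduct.smul_tmul', smul_add, smul_sub]; try module)
      (fun c d d' => by simp only [c2fun, add_lie, lie_add, tmul_add, add_tmul]; abel)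
      (fun t c d => by simp only [c2fun, smul_lie, lie_smul, tmul_smul, ← TensorProduct.smul_tmul', smul_add, smul_sub]; try module))
    (fun a a' b => TensorProduct.ext' fun c d => by
      simp only [LinearMap.add_apply, TensorProduct.lift.tmul, LinearMap.mk₂_apply]
      simp only [c2fun, add_lie, lie_add, tmul_add, add_tmul]; abel)
    (fun t a b => TensorProduct.ext' fun c d => by
      simp only [LinearMap.smul_apply, TensorProduct.lift.tmul, LinearMap.mk₂_apply]
      simp only [c2fun, smul_lie, lie_smul, tmul_smul, ← TensorProduct.smul_tmul', smul_add, smul_sub]; try module)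
    (fun a b b' => TensorProduct.ext' fun c d => by
      simp only [LinearMap.add_apply, TensorProduct.lift.tmul, LinearMap.mk₂_apply]
      simp only [c2fun, add_lie, lie_add, tmul_add, add_tmul]; abel)
    (fun t a b => TensorProduct.ext' fun c d => by
      simp only [LinearMap.smul_apply, TensorProduct.lift.tmul, LinearMap.mk₂_apply]
      simp only [c2fun, smul_lie, lie_smul, tmul_smul, ← TensorProduct.smul_tmul', smul_add, smul_sub]; try module)

lemma C2bil_tmul (x a b c d : L) :
    C2bil x (a ⊗ₜ[K] b) (c ⊗ₜ[K] d) = c2fun x a b c d := by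
  simp [C2bil]

noncomputable def C3bil (x : L) :
    L ⊗[K] L →ₗ[K] L ⊗[K] L →ₗ[K] L ⊗[K] (L ⊗[K] L) :=
  TensorProduct.lift <| LinearMap.mk₂ K
    (fun a b => TensorProduct.lift <| LinearMap.mk₂ K (c3fun (K := K) x a b)
      (fun c c' d => by simp only [c3fun, add_lie, lie_add, tmul_add, add_tmul]; abel)
      (fun t c d => by simp only [c3fun, smul_lie, lie_smul, tmul_smul, ← TensorProduct.smul_tmul', smul_add, smul_sub]; try module)
      (fun c d d' => by simp only [c3fun, add_lie, lie_add, tmul_add, add_tmul]; abel)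
      (fun t c d => by simp only [c3fun, smul_lie, lie_smul, tmul_smul, ← TensorProduct.smul_tmul', smul_add, smul_sub]; try module))
    (fun a a' b => TensorProduct.ext' fun c d => by
      simp only [LinearMap.add_apply, TensorProduct.lift.tmul, LinearMap.mk₂_apply]
      simp only [c3fun, add_lie, lie_add, tmul_add, add_tmul]; abel)
    (fun t a b => TensorProduct.ext' fun c d => by
      simp only [LinearMap.smul_apply, TensorProduct.lift.tmul, LinearMap.mk₂_apply]
      simp only [c3fun, smul_lie, lie_smul, tmul_smul, ← TensorProduct.smul_tmul', smul_add, smul_sub]; try module)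
    (fun a b b' => TensorProduct.ext' fun c d => by
      simp only [LinearMap.add_apply, TensorProduct.lift.tmul, LinearMap.mk₂_apply]
      simp only [c3fun, add_lie, lie_add, tmul_add, add_tmul]; abel)
    (fun t a b => TensorProduct.ext' fun c d => by
      simp only [LinearMap.smul_apply, TensorProduct.lift.tmul, LinearMap.mk₂_apply]
      simp only [c3fun, smul_lie, lie_smul, tmul_smul, ← TensorProduct.smul_tmul', smul_add, smul_sub]; try module)

lemma C3bil_tmul (x a b c d : L) :
    C3bil x (a ⊗ₜ[K] b) (c ⊗ₜ[K] d) = c3fun x a b c d := by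
  simp [C3bil]

lemma deltaR_apply (r : L ⊗[K] L) (y : L) : deltaR r y = ⁅y, r⁆ := rfl

lemma deltaR_add' (u v : L ⊗[K] L) : deltaR (u + v) = deltaR u + deltaR v := by
  ext y; simp [deltaR_apply]

lemma deltaR_zero' : deltaR (0 : L ⊗[K] L) = 0 := by
  ext y; simp [deltaR_apply]

noncomputable def mainExpr (x : L) (u v : L ⊗[K] L) : L ⊗[K] (L ⊗[K] L) :=
  altMap K L ((TensorProduct.assoc K L L L)
      ((TensorProduct.map (deltaR u) (LinearMap.id : L →ₗ[K] L)) (deltaR v x)))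
    + ⁅x, ybMap K L (u ⊗ₜ[K] v)⁆
    - C1bil x u v - C1bil x (TensorProduct.comm K L L u) v
    - C2bil x u v - C2bil x u (TensorProduct.comm K L L v)
    - C3bil x u v + C3bil x v u

set_option maxHeartbeats 2000000 in
lemma mainExpr_pure (x a b c d : L) :
    mainExpr x (a ⊗ₜ[K] b) (c ⊗ₜ[K] d) = 0 := by
  have hsax : ⁅a, x⁆ = -⁅x, a⁆ := (lie_skew a x).symm
  have hsbx : ⁅b, x⁆ = -⁅x, b⁆ := (lie_skew b x).symm
  have hsba : ⁅b, a⁆ = -⁅a, b⁆ := (lie_skew b a).symm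
  have hscx : ⁅c, x⁆ = -⁅x, c⁆ := (lie_skew c x).symm
  have hsca : ⁅c, a⁆ = -⁅a, c⁆ := (lie_skew c a).symm
  have hscb : ⁅c, b⁆ = -⁅b, c⁆ := (lie_skew c b).symm
  have hsdx : ⁅d, x⁆ = -⁅x, d⁆ := (lie_skew d x).symm
  have hsda : ⁅d, a⁆ = -⁅a, d⁆ := (lie_skew d a).symm
  have hsdb : ⁅d, b⁆ = -⁅b, d⁆ := (lie_skew d b).symm
  have hsdc : ⁅d, c⁆ = -⁅c, d⁆ := (lie_skew d c).symm
  have htxab : ⁅b, ⁅x, a⁆⁆ = ⁅a, ⁅x, b⁆⁆ - ⁅x, ⁅a, b⁆⁆ := by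
    rw [← lie_skew b ⁅x, a⁆, lie_lie]; abel
  have htxac : ⁅c, ⁅x, a⁆⁆ = ⁅a, ⁅x, c⁆⁆ - ⁅x, ⁅a, c⁆⁆ := by
    rw [← lie_skew c ⁅x, a⁆, lie_lie]; abel
  have htxad : ⁅d, ⁅x, a⁆⁆ = ⁅a, ⁅x, d⁆⁆ - ⁅x, ⁅a, d⁆⁆ := by
    rw [← lie_skew d ⁅x, a⁆, lie_lie]; abel
  have htxbc : ⁅c, ⁅x, b⁆⁆ = ⁅b, ⁅x, c⁆⁆ - ⁅x, ⁅b, c⁆⁆ := by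
    rw [← lie_skew c ⁅x, b⁆, lie_lie]; abel
  have htxbd : ⁅d, ⁅x, b⁆⁆ = ⁅b, ⁅x, d⁆⁆ - ⁅x, ⁅b, d⁆⁆ := by
    rw [← lie_skew d ⁅x, b⁆, lie_lie]; abel
  have htxcd : ⁅d, ⁅x, c⁆⁆ = ⁅c, ⁅x, d⁆⁆ - ⁅x, ⁅c, d⁆⁆ := by
    rw [← lie_skew d ⁅x, c⁆, lie_lie]; abel
  have htabc : ⁅c, ⁅a, b⁆⁆ = ⁅b, ⁅a, c⁆⁆ - ⁅a, ⁅b, c⁆⁆ := by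
    rw [← lie_skew c ⁅a, b⁆, lie_lie]; abel
  have htabd : ⁅d, ⁅a, b⁆⁆ = ⁅b, ⁅a, d⁆⁆ - ⁅a, ⁅b, d⁆⁆ := by
    rw [← lie_skew d ⁅a, b⁆, lie_lie]; abel
  have htacd : ⁅d, ⁅a, c⁆⁆ = ⁅c, ⁅a, d⁆⁆ - ⁅a, ⁅c, d⁆⁆ := by
    rw [← lie_skew d ⁅a, c⁆, lie_lie]; abel
  have htbcd : ⁅d, ⁅b, c⁆⁆ = ⁅c, ⁅b, d⁆⁆ - ⁅b, ⁅c, d⁆⁆ := by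
    rw [← lie_skew d ⁅b, c⁆, lie_lie]; abel
  simp only [mainExpr, comm_tmul, C1bil_tmul, C2bil_tmul, C3bil_tmul, c1fun, c2fun, c3fun,
    deltaR_apply, TensorProduct.LieModule.lie_tmul_right, map_add, map_sub, map_neg,
    TensorProduct.map_tmul, LinearMap.id_coe, id_eq,
    assoc_tmul, altMap, cycMap, LinearMap.add_apply, LinearMap.comp_apply,
    LinearEquiv.coe_coe, ybMap, lieBracketTensor, tensorTensorTensorComm_tmul,
    assoc_symm_tmul, lift.tmul, LieHom.coe_toLinearMap, LieAlgebra.ad_apply, lie_add,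
    lie_lie, hsax, hsbx, hsba, hscx, hsca, hscb, hsdx, hsda, hsdb, hsdc, htxab, htxac, htxad, htxbc, htxbd, htxcd, htabc, htabd, htacd, htbcd,
    lie_neg, neg_lie, neg_neg, tmul_neg, neg_tmul, tmul_sub, sub_tmul, tmul_add, add_tmul]
  abel

lemma mainExpr_eq_zero (x : L) (u v : L ⊗[K] L) : mainExpr x u v = 0 := by
  induction u using TensorProduct.induction_on with
  | zero =>
    simp only [mainExpr, deltaR_zero', TensorProduct.map_zero_left, LinearMap.zero_apply,
      map_zero, zero_tmul, lie_zero, LinearMap.map_zero]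
    abel
  | tmul a b =>
    induction v using TensorProduct.induction_on with
    | zero =>
      simp only [mainExpr, deltaR_zero', LinearMap.zero_apply, map_zero, tmul_zero,
        lie_zero, LinearMap.map_zero]
      abel
    | tmul c d => exact mainExpr_pure x a b c d
    | add v1 v2 h1 h2 =>
      have e : mainExpr x (a ⊗ₜ[K] b) (v1 + v2)
          = mainExpr x (a ⊗ₜ[K] b) v1 + mainExpr x (a ⊗ₜ[K] b) v2 := by
        simp only [mainExpr, deltaR_add', LinearMap.add_apply, map_add, tmul_add, lie_add,
          LinearMap.map_add]
        abel
      rw [e, h1, h2, add_zero]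
  | add u1 u2 h1 h2 =>
    have e : mainExpr x (u1 + u2) v = mainExpr x u1 v + mainExpr x u2 v := by
      simp only [mainExpr, deltaR_add', TensorProduct.map_add_left, LinearMap.add_apply,
        map_add, add_tmul, lie_add, LinearMap.map_add]
      abel
    rw [e, h1, h2, add_zero]

end AuxCYBE

/-- For an antisymmetric `r ∈ g ⊗ g`, `Alt((δ_r ⊗ id)(δ_r(x))) + ⁅x, ⟦r,r⟧⁆ = 0` in
`g⊗g⊗g` for every `x ∈ g`. -/
theorem alt_delta_sq_add_lie_yb_eq_zero
    {K : Type*} [Field K] {L : Type*} [LieRing L] [LieAlgebra K L]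
    (r : L ⊗[K] L) (hr : TensorProduct.comm K L L r = -r) (x : L) :
    altMap K L ((TensorProduct.assoc K L L L)
        ((TensorProduct.map (deltaR r) (LinearMap.id : L →ₗ[K] L)) (deltaR r x)))
      + ⁅x, ybMap K L (r ⊗ₜ[K] r)⁆ = 0 := by
  have h := mainExpr_eq_zero x r r
  rw [mainExpr, hr] at h
  simp only [map_neg, LinearMap.neg_apply] at h
  abel_nf at h ⊢
  exact h
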